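/- Let (Ω, Σ, μ) be a measure space with μ atomless, and let (B_i)_{i∈ℕ} ⊆ Σ be a sequence of sets of positive measure. Then there exists a sequence (E_i)_{i∈ℕ} ⊆ Σ of pairwise disjoint sets of positive measure with E_i ⊆ B_i for every i. -/

import Mathlib

open MeasureTheory ENNReal

section Aux

variable {Ω : Type*} [MeasurableSpace Ω]

lemma aux_small11 (μ : Measure Ω)
    (hatomless : ∀ A : Set Ω, MeasurableSet A →
      ∀ c : ℝ≥0∞, 0 < c → c < μ A →
        ∃ B ⊆ A, MeasurableSet B ∧ μ B = c)
    {A : Set Ω} (hA : MeasurableSet A) (hpos : 0 < μ A) {c : ℝ≥0∞} (hc : 0 < c) :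
    ∃ S, S ⊆ A ∧ MeasurableSet S ∧ 0 < μ S ∧ μ S ≤ c ∧ μ S ≠ ∞ := by
  set d := min c (min 1 (μ A)) with hd
  have hd0 : 0 < d := lt_min hc (lt_min one_pos hpos)
  have hd1 : d ≤ 1 := le_trans (min_le_right _ _) (min_le_left _ _)
  have hdtop : d ≠ ∞ := (lt_of_le_of_lt hd1 one_lt_top).ne
  have hdA : d ≤ μ A := le_trans (min_le_right _ _) (min_le_right _ _)
  have h2 : d / 2 < d := ENNReal.half_lt_self hd0.ne' hdtop
  obtain ⟨S, hSA, hSm, hSμ⟩ :=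
    hatomless A hA (d / 2) (ENNReal.half_pos hd0.ne') (lt_of_lt_of_le h2 hdA)
  refine ⟨S, hSA, hSm, ?_, ?_, ?_⟩
  · rw [hSμ]; exact ENNReal.half_pos hd0.ne'
  · rw [hSμ]; exact le_trans h2.le (min_le_left _ _)
  · rw [hSμ]; exact (lt_of_lt_of_le h2 (lt_of_le_of_lt hd1 one_lt_top).le).ne

/-- Invariant for the recursive construction. -/
def Inv11 (μ : Measure Ω) (B : ℕ → Set Ω) (n : ℕ) (F : ℕ → Set Ω) (m : ℕ → ℝ≥0∞) : Prop :=
  (∀ i ≤ n, MeasurableSet (F i)) ∧ (∀ i ≤ n, F i ⊆ B i) ∧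
  (∀ i ≤ n, ∀ j ≤ n, i ≠ j → Disjoint (F i) (F j)) ∧
  (∀ i ≤ n, 0 < m i) ∧ (∀ i ≤ n, m i ≠ ∞) ∧
  (∀ i ≤ n, m i * (2⁻¹ + 2⁻¹ ^ (n + 1)) ≤ μ (F i)) ∧
  (∀ i ≤ n, μ (F i) ≤ m i)

lemma half_le11 : (2⁻¹ : ℝ≥0∞) ≤ 1 := ENNReal.inv_le_one.mpr one_le_two

lemma pow_half_le11 (n : ℕ) : (2⁻¹ : ℝ≥0∞) ^ (n + 1) ≤ 2⁻¹ := by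
  calc (2⁻¹ : ℝ≥0∞) ^ (n + 1) = 2⁻¹ ^ n * 2⁻¹ := pow_succ _ _
    _ ≤ 1 * 2⁻¹ := mul_le_mul_left (pow_le_one' half_le11 n) _
    _ = 2⁻¹ := one_mul _

lemma factor_le_one11 (n : ℕ) : (2⁻¹ + 2⁻¹ ^ (n + 1) : ℝ≥0∞) ≤ 1 := by
  calc (2⁻¹ + 2⁻¹ ^ (n + 1) : ℝ≥0∞) ≤ 2⁻¹ + 2⁻¹ := add_le_add_right (pow_half_le11 n) _
    _ = 1 := ENNReal.inv_two_add_inv_two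

lemma factor_mono11 (n : ℕ) : (2⁻¹ + 2⁻¹ ^ (n + 2) : ℝ≥0∞) ≤ 2⁻¹ + 2⁻¹ ^ (n + 1) := by
  refine add_le_add_right ?_ _
  rw [pow_succ]
  exact mul_le_of_le_one_right zero_le half_le11

lemma step11 (μ : Measure Ω)
    (hatomless : ∀ A : Set Ω, MeasurableSet A →
      ∀ c : ℝ≥0∞, 0 < c → c < μ A →
        ∃ B ⊆ A, MeasurableSet B ∧ μ B = c)
    (B : ℕ → Set Ω) (hB : ∀ i, MeasurableSet (B i)) (hBpos : ∀ i, 0 < μ (B i))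
    (n : ℕ) (F : ℕ → Set Ω) (m : ℕ → ℝ≥0∞) (h : Inv11 μ B n F m) :
    ∃ F' m', Inv11 μ B (n + 1) F' m' ∧ (∀ i ≤ n, F' i ⊆ F i) ∧ (∀ i ≤ n, m' i = m i) := by
  obtain ⟨hmeas, hsub, hdisj, hm0, hmtop, hlow, hup⟩ := h
  set U := ⋃ i ∈ Finset.range (n + 1), F i with hU
  have hUmeas : MeasurableSet U :=
    MeasurableSet.biUnion (Finset.range (n + 1)).countable_toSet
      (fun i hi => hmeas i (Nat.lt_succ_iff.mp (Finset.mem_range.mp hi)))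
  by_cases hC : 0 < μ (B (n + 1) \ U)
  · -- easy case: fresh mass outside the union
    obtain ⟨S, hSsub, hSmeas, hS0, hS1, hStop⟩ :=
      aux_small11 μ hatomless ((hB (n + 1)).diff hUmeas) hC (c := 1) one_pos
    have hSdisj : ∀ k ≤ n, Disjoint S (F k) := by
      intro k hk
      refine Set.disjoint_left.mpr fun x hxS hxF => ?_
      exact (hSsub hxS).2 (Set.mem_biUnion (Finset.mem_range.mpr (by omega)) hxF)
    refine ⟨fun j => if j = n + 1 then S else F j,
      fun j => if j = n + 1 then μ S else m j, ?_, ?_, ?_⟩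
    · refine ⟨?_, ?_, ?_, ?_, ?_, ?_, ?_⟩
      · intro j hj; dsimp only
        split
        · exact hSmeas
        · exact hmeas j (by omega)
      · intro j hj; dsimp only
        split
        · next e => subst e; exact hSsub.trans Set.diff_subset
        · exact hsub j (by omega)
      · intro j hj k hk hjk; dsimp only
        split <;> split
        · omega
        · next e _ => subst e; exact hSdisj k (by omega)
        · next e => subst e; exact (hSdisj j (by omega)).symm
        · exact hdisj j (by omega) k (by omega) hjk
      · intro j hj; dsimp only
        split
        · exact hS0
        · exact hm0 j (by omega)
      · intro j hj; dsimp only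
        split
        · exact hStop
        · exact hmtop j (by omega)
      · intro j hj; dsimp only
        split
        · exact mul_le_of_le_one_right zero_le (factor_le_one11 (n + 1))
        · exact le_trans (mul_le_mul_right (factor_mono11 n) _) (hlow j (by omega))
      · intro j hj; dsimp only
        split
        · exact le_rfl
        · exact hup j (by omega)
    · intro j hj; dsimp only; rw [if_neg (by omega)]
    · intro j hj; dsimp only; rw [if_neg (by omega)]
  · -- hard case: B (n+1) is a.e. covered by the union; steal from some F i
    push_neg at hC
    have hC0 : μ (B (n + 1) \ U) = 0 := le_antisymm hC zero_le
    have hBU : 0 < μ (B (n + 1) ∩ U) := by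
      by_contra hcon
      push_neg at hcon
      have h1 : μ (B (n + 1)) ≤ μ (B (n + 1) \ U) + μ (B (n + 1) ∩ U) := by
        calc μ (B (n + 1)) = μ ((B (n + 1) \ U) ∪ (B (n + 1) ∩ U)) := by
              rw [Set.diff_union_inter]
          _ ≤ μ (B (n + 1) \ U) + μ (B (n + 1) ∩ U) := measure_union_le _ _
      rw [hC0, zero_add] at h1
      exact absurd (lt_of_lt_of_le (hBpos (n + 1))
        (h1.trans (le_antisymm hcon zero_le).le)) (lt_irrefl 0)
    obtain ⟨i, hi, hipos⟩ : ∃ i ≤ n, 0 < μ (B (n + 1) ∩ F i) := by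
      by_contra hcon
      push_neg at hcon
      have hc2 : μ (B (n + 1) ∩ U) ≤ ∑ i ∈ Finset.range (n + 1), μ (B (n + 1) ∩ F i) := by
        rw [hU, Set.inter_iUnion₂]
        exact measure_biUnion_finset_le _ _
      have hz : ∑ i ∈ Finset.range (n + 1), μ (B (n + 1) ∩ F i) = 0 :=
        Finset.sum_eq_zero fun k hk =>
          le_antisymm (hcon k (Nat.lt_succ_iff.mp (Finset.mem_range.mp hk))) zero_le
      rw [hz] at hc2
      exact absurd (lt_of_lt_of_le hBU hc2) (lt_irrefl 0)
    have hcpos : (0 : ℝ≥0∞) < m i * 2⁻¹ ^ (n + 2) :=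
      ENNReal.mul_pos (hm0 i hi).ne' (pow_ne_zero _ (by simp))
    obtain ⟨S, hSsub, hSmeas, hS0, hSle, hStop⟩ :=
      aux_small11 μ hatomless ((hB (n + 1)).inter (hmeas i hi)) hipos hcpos
    have hSFi : S ⊆ F i := hSsub.trans Set.inter_subset_right
    refine ⟨fun j => if j = n + 1 then S else if j = i then F i \ S else F j,
      fun j => if j = n + 1 then μ S else m j, ?_, ?_, ?_⟩
    · refine ⟨?_, ?_, ?_, ?_, ?_, ?_, ?_⟩
      · intro j hj; dsimp only
        split
        · exact hSmeas
        · split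
          · exact (hmeas i hi).diff hSmeas
          · exact hmeas j (by omega)
      · intro j hj; dsimp only
        split
        · next e => rw [e]; exact hSsub.trans Set.inter_subset_left
        · split
          · next e => rw [e]; exact Set.diff_subset.trans (hsub i hi)
          · exact hsub j (by omega)
      · intro j hj k hk hjk; dsimp only
        have key : ∀ l ≤ n, l ≠ i → Disjoint S (F l) :=
          fun l hl hli => (hdisj i hi l hl (fun e => hli e.symm)).mono_left hSFi
        by_cases hjn : j = n + 1 <;> by_cases hkn : k = n + 1
        · omega
        · rw [if_pos hjn, if_neg hkn]
          by_cases hki : k = i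
          · rw [if_pos hki]; exact disjoint_sdiff_self_right
          · rw [if_neg hki]; exact key k (by omega) hki
        · rw [if_neg hjn, if_pos hkn]
          by_cases hji : j = i
          · rw [if_pos hji]; exact disjoint_sdiff_self_left
          · rw [if_neg hji]; exact (key j (by omega) hji).symm
        · rw [if_neg hjn, if_neg hkn]
          have hj' : j ≤ n := by omega
          have hk' : k ≤ n := by omega
          by_cases hji : j = i <;> by_cases hki : k = i
          · omega
          · rw [if_pos hji, if_neg hki]
            exact (hdisj i hi k hk' (by omega)).mono_left Set.diff_subset
          · rw [if_neg hji, if_pos hki]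
            exact (hdisj j hj' i hi (by omega)).mono_right Set.diff_subset
          · rw [if_neg hji, if_neg hki]; exact hdisj j hj' k hk' hjk
      · intro j hj; dsimp only
        split
        · exact hS0
        · exact hm0 j (by omega)
      · intro j hj; dsimp only
        split
        · exact hStop
        · exact hmtop j (by omega)
      · intro j hj; dsimp only
        split
        · exact mul_le_of_le_one_right zero_le (factor_le_one11 (n + 1))
        · split
          · next hjn hji =>
            rw [hji]
            have hsplit : μ (F i) ≤ μ (F i \ S) + μ S := by
              calc μ (F i) ≤ μ ((F i \ S) ∪ S) := measure_mono (by
                    intro x hx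
                    by_cases hxS : x ∈ S
                    · exact Or.inr hxS
                    · exact Or.inl ⟨hx, hxS⟩)
                _ ≤ μ (F i \ S) + μ S := measure_union_le _ _
            have hkey : m i * (2⁻¹ + 2⁻¹ ^ (n + 2)) + μ S ≤ μ (F i \ S) + μ S := by
              calc m i * (2⁻¹ + 2⁻¹ ^ (n + 2)) + μ S
                  ≤ m i * (2⁻¹ + 2⁻¹ ^ (n + 2)) + m i * 2⁻¹ ^ (n + 2) :=
                    add_le_add_right hSle _
                _ = m i * (2⁻¹ + (2⁻¹ ^ (n + 2) + 2⁻¹ ^ (n + 2))) := by ring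
                _ = m i * (2⁻¹ + 2⁻¹ ^ (n + 1)) := by
                    congr 2
                    rw [← two_mul, pow_succ, mul_comm ((2 : ℝ≥0∞)⁻¹ ^ (n + 1)) 2⁻¹,
                      ← mul_assoc, ENNReal.mul_inv_cancel (by norm_num) (by norm_num), one_mul]
                _ ≤ μ (F i) := hlow i hi
                _ ≤ μ (F i \ S) + μ S := hsplit
            exact (ENNReal.add_le_add_iff_right hStop).mp hkey
          · exact le_trans (mul_le_mul_right (factor_mono11 n) _) (hlow j (by omega))
      · intro j hj; dsimp only
        split
        · exact le_rfl
        · split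
          · next hjn hji =>
            rw [hji]
            exact le_trans (measure_mono Set.diff_subset) (hup i hi)
          · exact hup j (by omega)
    · intro j hj; dsimp only
      rw [if_neg (by omega)]
      split
      · next e => rw [e]; exact Set.diff_subset
      · exact le_rfl
    · intro j hj; dsimp only; rw [if_neg (by omega)]

lemma base11 (μ : Measure Ω)
    (hatomless : ∀ A : Set Ω, MeasurableSet A →
      ∀ c : ℝ≥0∞, 0 < c → c < μ A →
        ∃ B ⊆ A, MeasurableSet B ∧ μ B = c)
    (B : ℕ → Set Ω) (hB : ∀ i, MeasurableSet (B i)) (hBpos : ∀ i, 0 < μ (B i)) :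
    ∃ F m, Inv11 μ B 0 F m := by
  obtain ⟨S, hSsub, hSmeas, hS0, hS1, hStop⟩ :=
    aux_small11 μ hatomless (hB 0) (hBpos 0) (c := 1) one_pos
  refine ⟨fun _ => S, fun _ => μ S, ?_, ?_, ?_, ?_, ?_, ?_, ?_⟩
  · exact fun i _ => hSmeas
  · intro i hi
    obtain rfl : i = 0 := Nat.le_zero.mp hi
    exact hSsub
  · intro i hi j hj hij
    exact (hij (by omega)).elim
  · exact fun i _ => hS0
  · exact fun i _ => hStop
  · exact fun i _ => mul_le_of_le_one_right zero_le (factor_le_one11 0)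
  · exact fun i _ => le_rfl

noncomputable def chain11 (μ : Measure Ω)
    (hatomless : ∀ A : Set Ω, MeasurableSet A →
      ∀ c : ℝ≥0∞, 0 < c → c < μ A →
        ∃ B ⊆ A, MeasurableSet B ∧ μ B = c)
    (B : ℕ → Set Ω) (hB : ∀ i, MeasurableSet (B i)) (hBpos : ∀ i, 0 < μ (B i)) :
    (n : ℕ) → {p : (ℕ → Set Ω) × (ℕ → ℝ≥0∞) // Inv11 μ B n p.1 p.2} :=
  Nat.rec
    ⟨⟨(base11 μ hatomless B hB hBpos).choose,
      (base11 μ hatomless B hB hBpos).choose_spec.choose⟩,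
      (base11 μ hatomless B hB hBpos).choose_spec.choose_spec⟩
    (fun n ih =>
      ⟨⟨(step11 μ hatomless B hB hBpos n ih.1.1 ih.1.2 ih.2).choose,
        (step11 μ hatomless B hB hBpos n ih.1.1 ih.1.2 ih.2).choose_spec.choose⟩,
        (step11 μ hatomless B hB hBpos n ih.1.1 ih.1.2 ih.2).choose_spec.choose_spec.1⟩)

lemma chain11_spec (μ : Measure Ω)
    (hatomless : ∀ A : Set Ω, MeasurableSet A →
      ∀ c : ℝ≥0∞, 0 < c → c < μ A →
        ∃ B ⊆ A, MeasurableSet B ∧ μ B = c)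
    (B : ℕ → Set Ω) (hB : ∀ i, MeasurableSet (B i)) (hBpos : ∀ i, 0 < μ (B i)) (n : ℕ) :
    (∀ i ≤ n, (chain11 μ hatomless B hB hBpos (n + 1)).1.1 i
        ⊆ (chain11 μ hatomless B hB hBpos n).1.1 i) ∧
    (∀ i ≤ n, (chain11 μ hatomless B hB hBpos (n + 1)).1.2 i
        = (chain11 μ hatomless B hB hBpos n).1.2 i) := by
  refine ⟨?_, ?_⟩
  · exact (step11 μ hatomless B hB hBpos n _ _
      (chain11 μ hatomless B hB hBpos n).2).choose_spec.choose_spec.2.1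
  · exact (step11 μ hatomless B hB hBpos n _ _
      (chain11 μ hatomless B hB hBpos n).2).choose_spec.choose_spec.2.2

end Aux


theorem stmt_11 {Ω : Type*} [MeasurableSpace Ω] (μ : Measure Ω)
    (hatomless : ∀ A : Set Ω, MeasurableSet A →
      ∀ c : ℝ≥0∞, 0 < c → c < μ A →
        ∃ B ⊆ A, MeasurableSet B ∧ μ B = c)
    (B : ℕ → Set Ω) (hB : ∀ i, MeasurableSet (B i))
    (hBpos : ∀ i, 0 < μ (B i)) :
    ∃ E : ℕ → Set Ω, (∀ i, MeasurableSet (E i)) ∧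
      (∀ i, 0 < μ (E i)) ∧ Pairwise (Function.onFun Disjoint E) ∧
      ∀ i, E i ⊆ B i := by
  classical
  set C := chain11 μ hatomless B hB hBpos with hC
  have hspec := chain11_spec μ hatomless B hB hBpos
  set G : ℕ → ℕ → Set Ω := fun i k => (C (i + k)).1.1 i with hG
  have hile : ∀ i k : ℕ, i ≤ i + k := fun i k => Nat.le_add_right i k
  have hGmeas : ∀ i k, MeasurableSet (G i k) := fun i k => (C (i + k)).2.1 i (hile i k)
  have hGstep : ∀ i k, G i (k + 1) ⊆ G i k := by
    intro i k
    exact (hspec (i + k)).1 i (hile i k)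
  have hGmono : ∀ i k l, k ≤ l → G i l ⊆ G i k := by
    intro i k l hkl
    induction l, hkl using Nat.le_induction with
    | base => exact le_rfl
    | succ l hkl ih => exact (hGstep i l).trans ih
  have hmconst : ∀ i k, (C (i + k)).1.2 i = (C i).1.2 i := by
    intro i k
    induction k with
    | zero => rfl
    | succ k ih => rw [← ih]; exact (hspec (i + k)).2 i (hile i k)
  set E : ℕ → Set Ω := fun i => ⋂ k, G i k with hE
  have hEsubG : ∀ i k, E i ⊆ G i k := fun i k => Set.iInter_subset _ k
  refine ⟨E, ?_, ?_, ?_, ?_⟩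
  · exact fun i => MeasurableSet.iInter (fun k => hGmeas i k)
  · -- positivity
    intro i
    have hm0 : 0 < (C i).1.2 i := (C i).2.2.2.2.1 i le_rfl
    have hmtop : (C i).1.2 i ≠ ∞ := (C i).2.2.2.2.2.1 i le_rfl
    have hlowk : ∀ k, (C i).1.2 i * 2⁻¹ ≤ μ (G i k) := by
      intro k
      have h1 := (C (i + k)).2.2.2.2.2.2.1 i (hile i k)
      calc (C i).1.2 i * 2⁻¹ = (C (i + k)).1.2 i * 2⁻¹ := by rw [hmconst]
        _ ≤ (C (i + k)).1.2 i * (2⁻¹ + 2⁻¹ ^ (i + k + 1)) :=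
            mul_le_mul_right le_self_add _
        _ ≤ μ (G i k) := h1
    have hfin : μ (G i 0) ≠ ∞ := by
      have := (C (i + 0)).2.2.2.2.2.2.2 i (hile i 0)
      exact fun h => hmtop (by rw [hmconst i 0] at this; exact top_le_iff.mp (h ▸ this))
    have heq : μ (E i) = ⨅ k, μ (G i k) := by
      refine Directed.measure_iInter (fun k => (hGmeas i k).nullMeasurableSet) ?_ ⟨0, hfin⟩
      intro k l
      exact ⟨max k l, hGmono i k _ (le_max_left _ _), hGmono i l _ (le_max_right _ _)⟩
    rw [heq]
    have : 0 < (C i).1.2 i * 2⁻¹ :=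
      ENNReal.mul_pos hm0.ne' (by simp)
    exact lt_of_lt_of_le this (le_iInf hlowk)
  · -- pairwise disjoint
    have key : ∀ i j, i < j → Disjoint (E i) (E j) := by
      intro i j hij
      have h1 : E i ⊆ (C j).1.1 i := by
        have : i + (j - i) = j := by omega
        refine (hEsubG i (j - i)).trans ?_
        rw [hG]
        simp only
        rw [this]
      have h2 : E j ⊆ (C j).1.1 j := by
        have := hEsubG j 0
        exact this
      exact ((C j).2.2.2.1 i (by omega) j le_rfl (by omega)).mono h1 h2
    intro i j hij
    rcases lt_or_gt_of_ne hij with h | h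
    · exact key i j h
    · exact (key j i h).symm
  · -- contained in B i
    intro i
    have h0 : E i ⊆ G i 0 := hEsubG i 0
    have h1 : G i 0 ⊆ B i := (C (i + 0)).2.2.1 i (hile i 0)
    exact h0.trans h1
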